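/- Let $\mathbb{F}$ be an algebraically closed field, $H$ and $K$ unital associative algebras, $\mathcal{A}$ a finite-dimensional $H$-simple algebra, and $\mathcal{S}$ a central $K$-simple algebra (i.e., $\mathcal{S}$ is unital with center $\mathbb{F} \cdot 1$, and $K$-simple). Then $\mathcal{A} \otimes_\mathbb{F} \mathcal{S}$ is $H \otimes_\mathbb{F} K$-simple under the action $(h \otimes k)(a \otimes s) = (h \cdot a) \otimes (k \cdot s)$. -/

import Mathlib

section GenAction

variable (F : Type*) {H A : Type*} [Field F] [Ring H] [Algebra F H]
  [NonUnitalRing A] [Module F A] [SMulCommClass F A A] [IsScalarTower F A A]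

/-- `φ : H → End_F(A)` is a generalized `H`-action if it is an algebra homomorphism satisfying
the twisted Leibniz rule: for each `h ∈ H` there are finitely many
`h'ᵢ, h''ᵢ, h'''ᵢ, h''''ᵢ ∈ H` with
`h(ab) = ∑ᵢ h'ᵢ(a) h''ᵢ(b) + h'''ᵢ(b) h''''ᵢ(a)` for all `a b`. -/
def IsGenAction (φ : H →ₐ[F] Module.End F A) : Prop :=
  ∀ h : H, ∃ (k : ℕ) (h₁ h₂ h₃ h₄ : Fin k → H), ∀ a b : A,
    φ h (a * b) =
      (∑ i, φ (h₁ i) a * φ (h₂ i) b) + ∑ i, φ (h₃ i) b * φ (h₄ i) a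

/-- A two-sided ideal `I` of `A` is an `H`-ideal if it is invariant under the action. -/
def IsHIdeal (φ : H →ₐ[F] Module.End F A) (I : TwoSidedIdeal A) : Prop :=
  ∀ (h : H), ∀ a ∈ I, φ h a ∈ I

/-- `A` is `H`-simple if `A² ≠ 0` and the only `H`-invariant two-sided ideals are `0` and `A`. -/
def IsHSimple (φ : H →ₐ[F] Module.End F A) : Prop :=
  (∃ a b : A, a * b ≠ 0) ∧ ∀ I : TwoSidedIdeal A, IsHIdeal F φ I → I = ⊥ ∨ I = ⊤

end GenAction

open scoped TensorProduct

namespace TensorHKAux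

variable {F H A : Type*} [Field F] [Ring H] [Algebra F H]
  [NonUnitalRing A] [Module F A] [SMulCommClass F A A] [IsScalarTower F A A]

/-- The multiplication algebra enlarged by the `H`-action. -/
def opAlg (φA : H →ₐ[F] Module.End F A) : Subalgebra F (Module.End F A) :=
  Algebra.adjoin F (Set.range (LinearMap.mulLeft F (A := A)) ∪
    Set.range (LinearMap.mulRight F (A := A)) ∪ Set.range φA)

variable (φA : H →ₐ[F] Module.End F A)

lemma mulLeft_mem_opAlg (a : A) : LinearMap.mulLeft F a ∈ opAlg φA :=
  Algebra.subset_adjoin (Or.inl (Or.inl ⟨a, rfl⟩))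

lemma mulRight_mem_opAlg (a : A) : LinearMap.mulRight F a ∈ opAlg φA :=
  Algebra.subset_adjoin (Or.inl (Or.inr ⟨a, rfl⟩))

lemma phi_mem_opAlg (h : H) : φA h ∈ opAlg φA :=
  Algebra.subset_adjoin (Or.inr ⟨h, rfl⟩)

lemma smul_def (t : opAlg φA) (a : A) : t • a = (t : Module.End F A) a := rfl

theorem isSimpleModule_opAlg (hA : IsHSimple F φA) : IsSimpleModule (opAlg φA) A := by
  obtain ⟨⟨a₀, b₀, hab⟩, hideal⟩ := hA
  have : Nontrivial A := nontrivial_of_ne (a₀ * b₀) 0 hab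
  rw [isSimpleModule_iff]
  constructor
  intro p
  let I : TwoSidedIdeal A := TwoSidedIdeal.mk' (p : Set A) p.zero_mem
    (fun hx hy => p.add_mem hx hy) (fun hx => p.neg_mem hx)
    (fun {x y} hy => p.smul_mem ⟨LinearMap.mulLeft F x, mulLeft_mem_opAlg φA x⟩ hy)
    (fun {x y} hx => p.smul_mem ⟨LinearMap.mulRight F y, mulRight_mem_opAlg φA y⟩ hx)
  have hmem : ∀ x, x ∈ I ↔ x ∈ p := fun x => TwoSidedIdeal.mem_mk' _ _ _ _ _ _ x
  have : IsHIdeal F φA I := by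
    intro h x hx
    rw [hmem] at hx ⊢
    exact p.smul_mem ⟨φA h, phi_mem_opAlg φA h⟩ hx
  rcases hideal I this with h | h
  · left
    ext x
    simp only [Submodule.mem_bot]
    rw [← hmem, h, TwoSidedIdeal.mem_bot]
  · right
    ext x
    simp only [Submodule.mem_top, iff_true]
    rw [← hmem, h]
    exact TwoSidedIdeal.mem_top A

variable [IsAlgClosed F] [FiniteDimensional F A]

/-- Every `opAlg`-linear endomorphism of `A` is a scalar. -/
theorem endo_scalar (hA : IsHSimple F φA) (g : A →ₗ[opAlg φA] A) :
    ∃ c : F, ∀ x : A, g x = c • x := by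
  haveI := isSimpleModule_opAlg φA hA
  haveI : Nontrivial A := IsSimpleModule.nontrivial (opAlg φA) A
  have hFsmul : ∀ (c : F) (x : A), (algebraMap F (opAlg φA) c) • x = c • x := by
    intro c x
    rw [smul_def]
    have : ((algebraMap F (opAlg φA) c : opAlg φA) : Module.End F A)
        = algebraMap F (Module.End F A) c := rfl
    rw [this, Module.algebraMap_end_apply]
  let gg : Module.End F A :=
    { toFun := g
      map_add' := g.map_add
      map_smul' := fun c x => by
        simp only [RingHom.id_apply]
        rw [← hFsmul c x, g.map_smul, hFsmul] }
  obtain ⟨c, hc⟩ := Module.End.exists_eigenvalue gg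
  obtain ⟨v, hv⟩ := hc.exists_hasEigenvector
  refine ⟨c, ?_⟩
  let g' : A →ₗ[opAlg φA] A :=
    { toFun := fun x => g x - c • x
      map_add' := fun x y => by simp only [g.map_add, smul_add]; abel
      map_smul' := fun t x => by
        simp only [RingHom.id_apply]
        rw [g.map_smul, smul_sub]
        congr 1
        rw [smul_def, smul_def, map_smul] }
  have hg'v : g' v = 0 := by
    have : gg v = c • v := hv.apply_eq_smul
    simp only [g', LinearMap.coe_mk, AddHom.coe_mk]
    rw [show g v = gg v from rfl, this, sub_self]
  have : ¬ Function.Injective g' := by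
    intro hinj
    exact hv.2 (hinj (by rw [hg'v, map_zero]))
  have hz : g' = 0 := g'.injective_or_eq_zero.resolve_left this
  intro x
  have := congrArg (fun f => f x) hz
  simp only [g', LinearMap.coe_mk, AddHom.coe_mk, LinearMap.zero_apply] at this
  have h2 : g x - c • x = 0 := this
  rw [sub_eq_zero] at h2
  exact h2
  
theorem semisimple_pi (hA : IsHSimple F φA) (n : ℕ) :
    IsSemisimpleModule (opAlg φA) (Fin n → A) := by
  haveI := isSimpleModule_opAlg φA hA
  refine isSemisimpleModule_of_isSemisimpleModule_submodule'
    (p := fun i : Fin n => LinearMap.range (LinearMap.single (opAlg φA) (fun _ : Fin n => A) i))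
    (fun i => IsSemisimpleModule.range _) ?_
  simp_rw [LinearMap.range_eq_map, Submodule.iSup_map_single, Submodule.pi_top]

theorem density (hA : IsHSimple F φA) {n : ℕ} {a : Fin n → A}
    (ha : LinearIndependent F a) (b : Fin n → A) :
    ∃ θ : Module.End F A, θ ∈ opAlg φA ∧ ∀ i, θ (a i) = b i := by
  haveI := isSimpleModule_opAlg φA hA
  haveI := semisimple_pi φA hA n
  set T := opAlg φA with hT
  set N : Submodule T (Fin n → A) := Submodule.span T {a} with hN
  obtain ⟨P, hP⟩ := exists_isCompl N
  let e : (Fin n → A) →ₗ[T] (Fin n → A) := N.subtype ∘ₗ (N.projectionOnto P hP)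
  have heN : ∀ x ∈ N, e x = x := by
    intro x hx
    have := Submodule.projectionOnto_apply_left hP ⟨x, hx⟩
    simp only [e, LinearMap.comp_apply, this]
    rfl
  have heRange : ∀ x, e x ∈ N := fun x => (N.projectionOnto P hP x).2
  let eij : Fin n → Fin n → (A →ₗ[T] A) := fun i j =>
    (LinearMap.proj i) ∘ₗ e ∘ₗ (LinearMap.single T (fun _ : Fin n => A) j)
  choose c hc using fun i j => endo_scalar φA hA (eij i j)
  have key : ∀ (x : Fin n → A) (i : Fin n), e x i = ∑ j, c i j • x j := by
    intro x i
    have hx : x = ∑ j, Pi.single j (x j) := by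
      simp [Finset.univ_sum_single]
    conv_lhs => rw [hx]
    rw [map_sum]
    rw [Finset.sum_apply]
    refine Finset.sum_congr rfl fun j _ => ?_
    have : e (Pi.single j (x j)) i = eij i j (x j) := rfl
    rw [this, hc]
  have haN : a ∈ N := Submodule.mem_span_singleton_self a
  have hdelta : ∀ i j, c i j = if j = i then (1 : F) else 0 := by
    intro i j
    have h1 : ∑ j, (c i j - if j = i then (1:F) else 0) • a j = 0 := by
      have h2 : ∑ j, c i j • a j = a i := by rw [← key, heN a haN]
      have h3 : ∑ j, (if j = i then (1:F) else 0) • a j = a i := by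
        simp [ite_smul]
      simp only [sub_smul, Finset.sum_sub_distrib, h2, h3, sub_self]
    have := Fintype.linearIndependent_iff.mp ha _ h1 j
    exact sub_eq_zero.mp this
  have heid : ∀ x, e x = x := by
    intro x
    funext i
    rw [key]
    simp [hdelta, ite_smul]
  have hNtop : ∀ x, x ∈ N := fun x => heid x ▸ heRange x
  obtain ⟨t, ht⟩ := Submodule.mem_span_singleton.mp (hNtop b)
  refine ⟨(t : Module.End F A), t.2, fun i => ?_⟩
  have := congrFun ht i
  exact this

end TensorHKAux

/-- Let `F` be an algebraically closed field, `H` and `K` unital associative algebras, `A` a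
finite-dimensional `H`-simple algebra, and `S` a central `K`-simple algebra (i.e. `S` is unital
with center `F·1`, and `K`-simple). Then `A ⊗_F S` is `H ⊗_F K`-simple under the action
`(h ⊗ k)(a ⊗ s) = (h⬝a) ⊗ (k⬝s)`. -/
theorem tensor_HK_simple
    (F : Type*) [Field F] [IsAlgClosed F] (H K A S : Type*)
    [Ring H] [Algebra F H] [Ring K] [Algebra F K]
    [NonUnitalRing A] [Module F A] [SMulCommClass F A A] [IsScalarTower F A A]
    [FiniteDimensional F A]
    [Ring S] [Algebra F S]
    (φA : H →ₐ[F] Module.End F A) (hφA : IsGenAction F φA) (hAsimple : IsHSimple F φA)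
    (φS : K →ₐ[F] Module.End F S) (hφS : IsGenAction F φS) (hSsimple : IsHSimple F φS)
    (hcentral : Subalgebra.center F S = ⊥)
    (φ : H ⊗[F] K →ₐ[F] Module.End F (A ⊗[F] S)) (hφ : IsGenAction F φ)
    (hpure : ∀ (h : H) (k : K) (a : A) (s : S),
      φ (h ⊗ₜ k) (a ⊗ₜ s) = (φA h a) ⊗ₜ (φS k s)) :
    IsHSimple F φ := by
  classical
  obtain ⟨a₀, b₀, hab⟩ := hAsimple.1
  have hSnt : Nontrivial S := by
    obtain ⟨s, t, hst⟩ := hSsimple.1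
    exact nontrivial_of_ne (s * t) 0 hst
  -- a nonzero dual functional at 1 ∈ S
  obtain ⟨f, hf1⟩ : ∃ f : Module.Dual F S, f 1 ≠ 0 := by
    by_contra hcon
    push_neg at hcon
    exact one_ne_zero ((Module.forall_dual_apply_eq_zero_iff F (1 : S)).mp hcon)
  have tmul_one_ne_zero : ∀ x : A, x ≠ 0 → x ⊗ₜ[F] (1 : S) ≠ 0 := by
    intro x hx h0
    let m : A ⊗[F] S →ₗ[F] A :=
      (TensorProduct.rid F A).toLinearMap ∘ₗ LinearMap.lTensor A f
    have hm : m (x ⊗ₜ[F] (1 : S)) = f 1 • x := by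
      simp [m, TensorProduct.rid_tmul]
    rw [h0, map_zero] at hm
    rcases smul_eq_zero.mp hm.symm with h | h
    · exact hf1 h
    · exact hx h
  constructor
  · exact ⟨a₀ ⊗ₜ (1 : S), b₀ ⊗ₜ (1 : S), by
      rw [Algebra.TensorProduct.tmul_mul_tmul, one_mul]
      exact tmul_one_ne_zero _ hab⟩
  intro I hI
  by_cases hbot : I = ⊥
  · exact Or.inl hbot
  right
  -- I is closed under F-scalars
  have hsmulI : ∀ (r : F) (x : A ⊗[F] S), x ∈ I → r • x ∈ I := by
    intro r x hx
    have := hI (algebraMap F (H ⊗[F] K) r) x hx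
    rwa [AlgHom.commutes, Module.algebraMap_end_apply] at this
  -- I is closed under rTensor of operators from opAlg φA
  have hrT : ∀ θ ∈ TensorHKAux.opAlg (F := F) φA, ∀ x ∈ I,
      LinearMap.rTensor S θ x ∈ I := by
    intro θ hθ
    induction hθ using Algebra.adjoin_induction with
    | mem θ hθ =>
      rcases hθ with (⟨a, rfl⟩ | ⟨a, rfl⟩) | ⟨h, rfl⟩
      · have heq : LinearMap.rTensor S (LinearMap.mulLeft F a)
            = LinearMap.mulLeft F (a ⊗ₜ[F] (1 : S)) := by
          apply TensorProduct.ext'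
          intro a' s
          simp [Algebra.TensorProduct.tmul_mul_tmul]
        intro x hx
        rw [heq]
        exact I.mul_mem_left _ _ hx
      · have heq : LinearMap.rTensor S (LinearMap.mulRight F a)
            = LinearMap.mulRight F (a ⊗ₜ[F] (1 : S)) := by
          apply TensorProduct.ext'
          intro a' s
          simp [Algebra.TensorProduct.tmul_mul_tmul]
        intro x hx
        rw [heq]
        exact I.mul_mem_right _ _ hx
      · have heq : LinearMap.rTensor S (φA h) = φ (h ⊗ₜ[F] (1 : K)) := by
          apply TensorProduct.ext'
          intro a' s
          rw [LinearMap.rTensor_tmul, hpure, map_one, Module.End.one_apply]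
        intro x hx
        rw [heq]
        exact hI _ x hx
    | algebraMap r =>
      have heq : LinearMap.rTensor S (algebraMap F (Module.End F A) r)
          = r • (LinearMap.id : A ⊗[F] S →ₗ[F] A ⊗[F] S) := by
        apply TensorProduct.ext'
        intro a' s
        rw [LinearMap.rTensor_tmul, Module.algebraMap_end_apply]
        simp [TensorProduct.smul_tmul']
      intro x hx
      rw [heq]
      exact hsmulI r x hx
    | add θ₁ θ₂ h₁ h₂ ih₁ ih₂ =>
      intro x hx
      rw [LinearMap.rTensor_add]
      exact I.add_mem (ih₁ x hx) (ih₂ x hx)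
    | mul θ₁ θ₂ h₁ h₂ ih₁ ih₂ =>
      intro x hx
      have : LinearMap.rTensor S (θ₁ * θ₂)
          = (LinearMap.rTensor S θ₁) ∘ₗ (LinearMap.rTensor S θ₂) :=
        LinearMap.rTensor_comp S θ₁ θ₂
      rw [this]
      exact ih₁ _ (ih₂ x hx)
  -- from one nonzero left factor to all
  have step2 : ∀ (a₁ : A), a₁ ≠ 0 → ∀ (t : S), a₁ ⊗ₜ[F] t ∈ I →
      ∀ a : A, a ⊗ₜ[F] t ∈ I := by
    intro a₁ h1 t hmem a
    have hli : LinearIndependent F (fun _ : Fin 1 => a₁) :=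
      linearIndependent_unique_iff.mpr h1
    obtain ⟨θ, hθT, hθ⟩ := TensorHKAux.density φA hAsimple hli (fun _ => a)
    have := hrT θ hθT _ hmem
    rwa [LinearMap.rTensor_tmul, hθ 0] at this
  -- find a nonzero s₀ with a ⊗ s₀ ∈ I for all a
  obtain ⟨s₀, hs₀, hIs₀⟩ : ∃ s₀ : S, s₀ ≠ 0 ∧ ∀ a : A, a ⊗ₜ[F] s₀ ∈ I := by
    obtain ⟨x₀, hx₀I, hx₀⟩ : ∃ x₀, x₀ ∈ I ∧ x₀ ≠ 0 := by
      by_contra hcon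
      push_neg at hcon
      exact hbot (eq_bot_iff.mpr (fun x hx => (TwoSidedIdeal.mem_bot _).mpr (hcon x hx)))
    set e := Module.finBasis F A with he
    set cm : Fin (Module.finrank F A) → (A ⊗[F] S →ₗ[F] S) := fun i =>
      (TensorProduct.lid F S).toLinearMap ∘ₗ LinearMap.rTensor S (e.coord i) with hcm
    have hgen : ∀ x : A ⊗[F] S, x = ∑ i, e i ⊗ₜ[F] (cm i x) := by
      intro x
      induction x using TensorProduct.induction_on with
      | zero => simp
      | tmul a s =>
        simp only [hcm, LinearMap.comp_apply, LinearMap.rTensor_tmul,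
          LinearEquiv.coe_coe, TensorProduct.lid_tmul]
        have hsw : ∀ i : Fin (Module.finrank F A),
            e i ⊗ₜ[F] ((e.coord i) a • s) = ((e.coord i) a • e i) ⊗ₜ[F] s :=
          fun i => (TensorProduct.smul_tmul _ _ _).symm
        rw [Finset.sum_congr rfl (fun i _ => hsw i), ← TensorProduct.sum_tmul]
        congr 1
        simp_rw [Module.Basis.coord_apply]
        exact (e.sum_repr a).symm
      | add u v hu hv =>
        simp only [map_add, TensorProduct.tmul_add, Finset.sum_add_distrib]
        rw [← hu, ← hv]
    obtain ⟨i₀, hi₀⟩ : ∃ i, cm i x₀ ≠ 0 := by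
      by_contra hcon
      push_neg at hcon
      apply hx₀
      rw [hgen x₀]
      simp [hcon]
    refine ⟨cm i₀ x₀, hi₀, fun a => ?_⟩
    obtain ⟨θ, hθT, hθ⟩ := TensorHKAux.density φA hAsimple e.linearIndependent
      (fun j => if j = i₀ then a else 0)
    have hmem := hrT θ hθT x₀ hx₀I
    have hval : LinearMap.rTensor S θ x₀ = a ⊗ₜ[F] (cm i₀ x₀) := by
      conv_lhs => rw [hgen x₀]
      rw [map_sum]
      rw [Finset.sum_eq_single i₀]
      · rw [LinearMap.rTensor_tmul, hθ, if_pos rfl]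
      · intro j _ hj
        rw [LinearMap.rTensor_tmul, hθ, if_neg hj, TensorProduct.zero_tmul]
      · intro h
        exact absurd (Finset.mem_univ i₀) h
    rwa [hval] at hmem
  -- the set of right factors is a K-invariant two-sided ideal of S
  set Jc : Set S := {s : S | ∀ a : A, a ⊗ₜ[F] s ∈ I} with hJc
  have hJ0 : (0 : S) ∈ Jc := fun a => by rw [TensorProduct.tmul_zero]; exact I.zero_mem
  have hJadd : ∀ {x y : S}, x ∈ Jc → y ∈ Jc → x + y ∈ Jc := fun hx hy a => by
    rw [TensorProduct.tmul_add]; exact I.add_mem (hx a) (hy a)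
  have hJneg : ∀ {x : S}, x ∈ Jc → -x ∈ Jc := fun hx a => by
    rw [TensorProduct.tmul_neg]; exact I.neg_mem (hx a)
  have hJml : ∀ {x y : S}, y ∈ Jc → x * y ∈ Jc := by
    intro x y hy a
    have h1 := I.mul_mem_left (a₀ ⊗ₜ[F] x) (b₀ ⊗ₜ[F] y) (hy b₀)
    rw [Algebra.TensorProduct.tmul_mul_tmul] at h1
    exact step2 _ hab _ h1 a
  have hJmr : ∀ {x y : S}, x ∈ Jc → x * y ∈ Jc := by
    intro x y hx a
    have h1 := I.mul_mem_right (a₀ ⊗ₜ[F] x) (b₀ ⊗ₜ[F] y) (hx a₀)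
    rw [Algebra.TensorProduct.tmul_mul_tmul] at h1
    exact step2 _ hab _ h1 a
  set J : TwoSidedIdeal S := TwoSidedIdeal.mk' Jc hJ0 hJadd hJneg hJml hJmr with hJ
  have hJmem : ∀ s : S, s ∈ J ↔ s ∈ Jc := fun s =>
    TwoSidedIdeal.mem_mk' _ _ _ _ _ _ s
  have hJK : IsHIdeal F φS J := by
    intro k s hs
    rw [hJmem] at hs ⊢
    intro a
    have := hI ((1 : H) ⊗ₜ[F] k) (a ⊗ₜ[F] s) (hs a)
    rwa [hpure, map_one, Module.End.one_apply] at this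
  have hJtop : J = ⊤ := by
    rcases hSsimple.2 J hJK with h | h
    · exfalso
      apply hs₀
      rw [← TwoSidedIdeal.mem_bot (R := S), ← h, hJmem]
      exact hIs₀
    · exact h
  have hall : ∀ (a : A) (s : S), a ⊗ₜ[F] s ∈ I := by
    intro a s
    have : s ∈ J := hJtop ▸ TwoSidedIdeal.mem_top S
    exact (hJmem s).mp this a
  rw [eq_top_iff, TwoSidedIdeal.le_iff]
  rintro x -
  show x ∈ I
  induction x using TensorProduct.induction_on with
  | zero => exact I.zero_mem
  | tmul a s => exact hall a s
  | add u v hu hv => exact I.add_mem hu hv
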